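/- Let G be a graph on n vertices with chromatic number χ(G) ≤ p, let A_1,…,A_p be the color classes of a proper p-coloring of V(G), let m_1,…,m_p be the part sizes of the Turán graph T(n,p) (so each m_i ∈ {⌈n/p⌉, ⌊n/p⌋} and Σ m_i = n), and write |A_i| = m_i + s_i. Then e(G) ≤ t(n,p) − Σ_{i=1}^{p} C(|s_i|, 2), where t(n,p) is the number of edges of T(n,p). -/

import Mathlib

open SimpleGraph

universe u v

/-- `F` embeds into `G` as a subgraph (injective graph homomorphism). -/
def Embeds {α : Type u} {β : Type v} (F : SimpleGraph α) (G : SimpleGraph β) : Prop :=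
  ∃ f : α ↪ β, ∀ a b, F.Adj a b → G.Adj (f a) (f b)

/-- Join of two graphs: all cross edges added. -/
def join {α β : Type*} (G : SimpleGraph α) (H : SimpleGraph β) : SimpleGraph (α ⊕ β) where
  Adj x y :=
    match x, y with
    | Sum.inl a, Sum.inl b => G.Adj a b
    | Sum.inr a, Sum.inr b => H.Adj a b
    | Sum.inl _, Sum.inr _ => True
    | Sum.inr _, Sum.inl _ => True
  symm := by
    constructor
    rintro (a | a) (b | b) h
    · exact G.adj_symm h
    · trivial
    · trivial
    · exact H.adj_symm h
  loopless := by
    constructor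
    rintro (a | a) h
    · exact G.loopless.irrefl a h
    · exact H.loopless.irrefl a h

/-- Disjoint union of two graphs. -/
def dUnion {α β : Type*} (G : SimpleGraph α) (H : SimpleGraph β) : SimpleGraph (α ⊕ β) where
  Adj x y :=
    match x, y with
    | Sum.inl a, Sum.inl b => G.Adj a b
    | Sum.inr a, Sum.inr b => H.Adj a b
    | Sum.inl _, Sum.inr _ => False
    | Sum.inr _, Sum.inl _ => False
  symm := by
    constructor
    rintro (a | a) (b | b) h
    · exact G.adj_symm h
    · exact h.elim
    · exact h.elim
    · exact H.adj_symm h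
  loopless := by
    constructor
    rintro (a | a) h
    · exact G.loopless.irrefl a h
    · exact H.loopless.irrefl a h

/-- The star `S_{k+1}` on `k+1` vertices, with center `0`. -/
def starG (k : ℕ) : SimpleGraph (Fin (k + 1)) :=
  SimpleGraph.fromRel (fun i _ => i = 0)

/-- The matching `M_{2k}` consisting of `k` disjoint edges on `2k` vertices. -/
def matchingG (k : ℕ) : SimpleGraph (Fin (2 * k)) :=
  SimpleGraph.fromRel (fun i j => (i : ℕ) / 2 = (j : ℕ) / 2)

/-- `Q(p,k) = K₁ ∨ T(pk,p)`. -/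
def Q (p k : ℕ) : SimpleGraph (Unit ⊕ Fin (p * k)) :=
  join (⊤ : SimpleGraph Unit) (SimpleGraph.turanGraph (p * k) p)

/-- Number of edges of a graph. -/
noncomputable def eCount {α : Type*} (G : SimpleGraph α) : ℕ := Nat.card G.edgeSet

/-- `t(n,p)`, the number of edges of the Turán graph `T(n,p)`. -/
noncomputable def tur (n p : ℕ) : ℕ := eCount (SimpleGraph.turanGraph n p)

/-- Degree of a vertex, instance-free. -/
noncomputable def ndeg {α : Type*} (G : SimpleGraph α) (v : α) : ℕ := Nat.card (G.neighborSet v)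

/-- An edge-coloring `c` of `K_n` admits a rainbow copy of `F`. -/
def HasRainbow {n : ℕ} {β : Type*} (c : Sym2 (Fin n) → ℕ) (F : SimpleGraph β) : Prop :=
  ∃ f : β ↪ Fin n, ∀ a b a' b', F.Adj a b → F.Adj a' b' →
    c s(f a, f b) = c s(f a', f b') → s(a, b) = s(a', b')

/-- Number of colors used on the edges of `K_n` by the coloring `c`. -/
noncomputable def colorsUsed (n : ℕ) (c : Sym2 (Fin n) → ℕ) : ℕ :=
  Nat.card (c '' (⊤ : SimpleGraph (Fin n)).edgeSet)

/-- The Turán graph `T(vp,p)` with a matching of `k-1` edges added inside the part `0`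
and one extra edge added inside the part `1`. -/
def turanMM (w p k : ℕ) : SimpleGraph (Fin (w * p)) :=
  SimpleGraph.fromRel (fun i j =>
    ((i : ℕ) % p ≠ (j : ℕ) % p)
    ∨ ((i : ℕ) % p = 0 ∧ (j : ℕ) % p = 0 ∧ (i : ℕ) / p / 2 = (j : ℕ) / p / 2 ∧
        (i : ℕ) / p < 2 * (k - 1))
    ∨ ((i : ℕ) % p = 1 ∧ (j : ℕ) % p = 1 ∧ (i : ℕ) / p < 2 ∧ (j : ℕ) / p < 2))
open Finset

/-- complete multipartite graph from a map -/
def Kf {n p : ℕ} (f : Fin n → Fin p) : SimpleGraph (Fin n) where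
  Adj x y := f x ≠ f y
  symm := ⟨fun _ _ h => Ne.symm h⟩
  loopless := ⟨fun _ h => h rfl⟩

instance {n p : ℕ} (f : Fin n → Fin p) : DecidableRel (Kf f).Adj :=
  fun x y => inferInstanceAs (Decidable (f x ≠ f y))

lemma eCount_eq {α : Type*} [Fintype α] (G : SimpleGraph α) [DecidableRel G.Adj] :
    eCount G = G.edgeFinset.card := by
  rw [eCount, Nat.card_eq_fintype_card, ← Set.toFinset_card]
  exact congrArg Finset.card (by ext e; simp)

lemma Kf_degree {n p : ℕ} (f : Fin n → Fin p) (v : Fin n) :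
    (Kf f).degree v + (univ.filter fun w => f w = f v).card = n := by
  rw [degree, neighborFinset_eq_filter]
  have h : (univ.filter ((Kf f).Adj v)) = (univ.filter fun w => ¬ f w = f v) := by
    apply filter_congr; intro w _
    constructor <;> intro h <;> exact fun hh => h hh.symm
  rw [h, add_comm]
  simpa using card_filter_add_card_filter_not (s := (univ : Finset (Fin n)))
    (p := fun w => f w = f v)

lemma Kf_count {n p : ℕ} (f : Fin n → Fin p) :
    2 * (Kf f).edgeFinset.card + ∑ r, (univ.filter fun w => f w = r).card
      * (univ.filter fun w => f w = r).card = n * n := by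
  have h1 : ∑ v : Fin n, (Kf f).degree v = 2 * (Kf f).edgeFinset.card :=
    sum_degrees_eq_twice_card_edges _
  have h2 : ∑ v : Fin n, (univ.filter fun w => f w = f v).card
      = ∑ r, (univ.filter fun w => f w = r).card * (univ.filter fun w => f w = r).card := by
    rw [← Finset.sum_fiberwise (univ : Finset (Fin n)) f
      (fun v => (univ.filter fun w => f w = f v).card)]
    refine Finset.sum_congr rfl (fun r _ => ?_)
    have hc : ∀ v ∈ univ.filter (fun i => f i = r),
        (univ.filter fun w => f w = f v).card = (univ.filter fun w => f w = r).card := by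
      intro v hv; simp only [mem_filter] at hv; rw [hv.2]
    rw [Finset.sum_congr rfl hc, Finset.sum_const, smul_eq_mul]
  calc 2 * (Kf f).edgeFinset.card + ∑ r, (univ.filter fun w => f w = r).card
        * (univ.filter fun w => f w = r).card
      = ∑ v : Fin n, ((Kf f).degree v + (univ.filter fun w => f w = f v).card) := by
        rw [Finset.sum_add_distrib, h1, h2]
    _ = ∑ v : Fin n, n := Finset.sum_congr rfl (fun v _ => Kf_degree f v)
    _ = n * n := by simp [Finset.card_univ, mul_comm]

lemma Kf_classes_sum {n p : ℕ} (f : Fin n → Fin p) :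
    ∑ r, (univ.filter fun w => f w = r).card = n := by
  simpa using Finset.sum_fiberwise (univ : Finset (Fin n)) f (fun _ => (1 : ℕ))

lemma Kf_count_int {n p : ℕ} (f : Fin n → Fin p) :
    (2 * eCount (Kf f) : ℤ) = n * (n - 1)
      - ∑ r, ((univ.filter fun w => f w = r).card : ℤ)
          * (((univ.filter fun w => f w = r).card : ℤ) - 1) := by
  have h1 := Kf_count f
  have h2 := Kf_classes_sum f
  have c1 : ((2 * (Kf f).edgeFinset.card + ∑ r, (univ.filter fun w => f w = r).card
      * (univ.filter fun w => f w = r).card : ℕ) : ℤ) = (n : ℤ) * n := by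
    rw [h1]; push_cast; ring
  have c2 : ((∑ r, (univ.filter fun w => f w = r).card : ℕ) : ℤ) = n := by rw [h2]
  push_cast at c1 c2
  rw [eCount_eq]
  have : ∑ r, ((univ.filter fun w => f w = r).card : ℤ)
      * (((univ.filter fun w => f w = r).card : ℤ) - 1)
    = ∑ r, ((univ.filter fun w => f w = r).card : ℤ)
      * ((univ.filter fun w => f w = r).card : ℤ)
      - ∑ r, ((univ.filter fun w => f w = r).card : ℤ) := by
    rw [← Finset.sum_sub_distrib]; exact Finset.sum_congr rfl (fun r _ => by ring)
  rw [this, c2]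
  linarith

def fmod (n : ℕ) {p : ℕ} (hp : 0 < p) : Fin n → Fin p :=
  fun v => ⟨(v : ℕ) % p, Nat.mod_lt _ hp⟩

lemma turan_eq_Kf (n : ℕ) {p : ℕ} (hp : 0 < p) :
    SimpleGraph.turanGraph n p = Kf (fmod n hp) := by
  ext v w
  simp only [SimpleGraph.turanGraph, Kf, fmod, Ne, Fin.mk.injEq]

lemma fmod_class_le (n : ℕ) {p : ℕ} (hp : 0 < p) (r : Fin p) :
    (univ.filter fun w => fmod n hp w = r).card ≤ n / p + 1 := by
  have : (univ.filter fun w => fmod n hp w = r).card ≤ (Finset.range (n / p + 1)).card := by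
    refine Finset.card_le_card_of_injOn (fun v => (v : ℕ) / p) ?_ ?_
    · intro v _
      rw [Finset.mem_coe, Finset.mem_range, Nat.lt_succ_iff]
      exact Nat.div_le_div_right (le_of_lt v.isLt)
    · intro v hv w hw h
      simp only [Finset.coe_filter, Set.mem_setOf_eq, Finset.mem_univ, true_and] at hv hw
      have hv2 : (v : ℕ) % p = (r : ℕ) := congrArg Fin.val hv
      have hw2 : (w : ℕ) % p = (r : ℕ) := congrArg Fin.val hw
      have hdiv : (v : ℕ) / p = (w : ℕ) / p := h
      apply Fin.ext
      calc (v : ℕ) = p * ((v : ℕ) / p) + (v : ℕ) % p := (Nat.div_add_mod _ _).symm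
        _ = p * ((w : ℕ) / p) + (w : ℕ) % p := by rw [hdiv, hv2, hw2]
        _ = (w : ℕ) := Nat.div_add_mod _ _
  simpa using this

lemma fmod_class_ge (n : ℕ) {p : ℕ} (hp : 0 < p) (r : Fin p) :
    n / p ≤ (univ.filter fun w => fmod n hp w = r).card := by
  rcases Nat.eq_zero_or_pos (n / p) with h | h
  · omega
  have hn : 0 < n := by
    have := Nat.div_mul_le_self n p
    nlinarith [hp, h]
  have : (Finset.range (n / p)).card ≤ (univ.filter fun w => fmod n hp w = r).card := by
    refine Finset.card_le_card_of_injOn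
      (fun j => (⟨((r : ℕ) + p * j) % n, Nat.mod_lt _ hn⟩ : Fin n)) ?_ ?_
    · intro j hj
      rw [Finset.mem_coe, Finset.mem_range] at hj
      have hlt : (r : ℕ) + p * j < n := by
        have h1 : (r : ℕ) + p * j < p * (j + 1) := by
          have := r.isLt; nlinarith
        have h2 : p * (j + 1) ≤ p * (n / p) := Nat.mul_le_mul_left p (by omega)
        have h3 : p * (n / p) ≤ n := Nat.mul_div_le n p
        omega
      simp only [Finset.coe_filter, Set.mem_setOf_eq, Finset.mem_coe, Finset.mem_filter, Finset.mem_univ, true_and, fmod]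
      refine Finset.mem_filter.mpr ⟨Finset.mem_univ _, ?_⟩
      apply Fin.ext
      simp only [Nat.mod_eq_of_lt hlt]
      rw [Nat.add_mul_mod_self_left, Nat.mod_eq_of_lt r.isLt]
    · intro j hj j' hj' h
      rw [Finset.mem_coe, Finset.mem_range] at hj hj'
      have hlt : ∀ j, j < n / p → (r : ℕ) + p * j < n := by
        intro j hjlt
        have h1 : (r : ℕ) + p * j < p * (j + 1) := by
          have := r.isLt; nlinarith
        have h2 : p * (j + 1) ≤ p * (n / p) := Nat.mul_le_mul_left p (by omega)
        have h3 : p * (n / p) ≤ n := Nat.mul_div_le n p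
        omega
      have e1 := Nat.mod_eq_of_lt (hlt j hj)
      have e2 := Nat.mod_eq_of_lt (hlt j' hj')
      have hval : ((r : ℕ) + p * j) % n = ((r : ℕ) + p * j') % n := congrArg Fin.val h
      rw [e1, e2] at hval
      exact Nat.eq_of_mul_eq_mul_left hp (Nat.add_left_cancel hval)
  simpa using this

/-- any near-equal sequence summing to `N` has the same `∑ v(v-1)`. -/
lemma balanced_sum {p : ℕ} (q N : ℤ) (g : Fin p → ℤ)
    (hlo : ∀ i, q ≤ g i) (hhi : ∀ i, g i ≤ q + 1)
    (hsum : ∑ i, g i = N) :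
    ∑ i, g i * (g i - 1) = p * (q * (q - 1)) + 2 * q * (N - p * q) := by
  have key : ∀ i, g i * (g i - 1) = q * (q - 1) + 2 * q * (g i - q) := by
    intro i
    have h1 := hlo i
    have h2 := hhi i
    have : g i = q ∨ g i = q + 1 := by omega
    rcases this with h | h <;> rw [h] <;> ring
  calc ∑ i, g i * (g i - 1)
      = ∑ i : Fin p, (q * (q - 1) + 2 * q * (g i - q)) :=
        Finset.sum_congr rfl (fun i _ => key i)
    _ = p * (q * (q - 1)) + 2 * q * (N - p * q) := by
        rw [Finset.sum_add_distrib, Finset.sum_const, ← Finset.mul_sum,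
          Finset.sum_sub_distrib, hsum, Finset.sum_const, Finset.card_univ, Fintype.card_fin]
        ring


lemma two_mul_choose_two_nat (k : ℕ) : 2 * k.choose 2 = k * (k - 1) := by
  rcases k with _ | m
  · simp
  · rw [Nat.choose_two_right]
    have he : Even ((m + 1) * m) := by
      have := Nat.even_mul_succ_self m
      rwa [mul_comm] at this
    have := Nat.div_mul_cancel he.two_dvd
    simp only [Nat.add_sub_cancel]
    omega

lemma two_mul_choose_two_int (a : ℤ) : 2 * (a.natAbs.choose 2 : ℤ) = |a| * (|a| - 1) := by
  have hn := two_mul_choose_two_nat a.natAbs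
  have hcast := congrArg (fun x : ℕ => (x : ℤ)) hn
  rcases Nat.eq_zero_or_pos a.natAbs with h | h
  · have : a = 0 := Int.natAbs_eq_zero.mp h
    simp [this]
  · have habs : |a| = (a.natAbs : ℤ) := Int.abs_eq_natAbs a
    rw [habs]
    push_cast [h] at hcast
    push_cast
    omega

lemma pt_key (q mm ss : ℤ) (h1 : q ≤ mm) (h2 : mm ≤ q + 1) :
    2 * q * ss ≤ (mm + ss) * ((mm + ss) - 1) - mm * (mm - 1) - |ss| * (|ss| - 1) := by
  rcases le_or_gt 0 ss with hs | hs
  · rw [abs_of_nonneg hs]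
    nlinarith [mul_nonneg (sub_nonneg.2 h1) hs]
  · rw [abs_of_neg hs]
    nlinarith [mul_nonneg (by linarith : (0:ℤ) ≤ q + 1 - mm) (by linarith : (0:ℤ) ≤ -ss)]

theorem stmt2 (n p : ℕ) (hp : 0 < p) (G : SimpleGraph (Fin n)) (c : G.Coloring (Fin p))
    (m : Fin p → ℕ) (s : Fin p → ℤ)
    (hm : ∀ i, m i = n / p ∨ m i = (n + p - 1) / p)
    (hsum : ∑ i, m i = n)
    (hA : ∀ i, (Nat.card {v : Fin n // c v = i} : ℤ) = (m i : ℤ) + s i) :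
    (eCount G : ℤ) ≤ (tur n p : ℤ) - ∑ i, ((s i).natAbs.choose 2 : ℤ) := by
  classical
  set q : ℤ := ((n / p : ℕ) : ℤ) with hqdef
  -- ceil bounds
  have hub : (n + p - 1) / p ≤ n / p + 1 := by
    have h1 : (n + p) / p = n / p + 1 := Nat.add_div_right n hp
    have h2 : (n + p - 1) / p ≤ (n + p) / p := Nat.div_le_div_right (by omega)
    omega
  have hlb : n / p ≤ (n + p - 1) / p := Nat.div_le_div_right (by omega)
  -- G edge count bound
  have hGle : (eCount G : ℤ) ≤ (eCount (Kf (c : Fin n → Fin p)) : ℤ) := by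
    have hsub : G.edgeSet ⊆ (Kf (c : Fin n → Fin p)).edgeSet :=
      SimpleGraph.edgeSet_mono (fun v w h => c.valid h)
    have := Set.ncard_le_ncard hsub (Set.toFinite _)
    rw [eCount, eCount, Nat.card_coe_set_eq, Nat.card_coe_set_eq]
    exact_mod_cast this
  have hKf := Kf_count_int (c : Fin n → Fin p)
  have hTurEq : (tur n p : ℤ) = (eCount (Kf (fmod n hp)) : ℤ) := by
    rw [tur, turan_eq_Kf n hp]
  have hTur := Kf_count_int (fmod n hp)
  -- class sizes of the coloring
  have ha : ∀ i, ((univ.filter fun w => (c : Fin n → Fin p) w = i).card : ℤ)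
      = (m i : ℤ) + s i := by
    intro i
    rw [← hA i, Nat.card_eq_fintype_card, Fintype.card_subtype]
  have hsumA : ∑ i, ((univ.filter fun w => (c : Fin n → Fin p) w = i).card) = n :=
    Kf_classes_sum _
  -- Turán class sums
  have hTc : ∑ r, ((univ.filter fun w => fmod n hp w = r).card : ℤ)
      * (((univ.filter fun w => fmod n hp w = r).card : ℤ) - 1)
      = p * (q * (q - 1)) + 2 * q * ((n : ℤ) - p * q) := by
    apply balanced_sum
    · intro i; rw [hqdef]; exact_mod_cast fmod_class_ge n hp i
    · intro i; rw [hqdef]; exact_mod_cast fmod_class_le n hp i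
    · exact_mod_cast congrArg (fun x : ℕ => (x : ℤ)) (Kf_classes_sum (fmod n hp))
  have hmlo : ∀ i, q ≤ (m i : ℤ) := by
    intro i
    have : n / p ≤ m i := by rcases hm i with h | h <;> omega
    rw [hqdef]; exact_mod_cast this
  have hmhi : ∀ i, (m i : ℤ) ≤ q + 1 := by
    intro i; rw [hqdef]
    have : m i ≤ n / p + 1 := by rcases hm i with h | h <;> omega
    exact_mod_cast this
  have hM : ∑ i, (m i : ℤ) * ((m i : ℤ) - 1)
      = p * (q * (q - 1)) + 2 * q * ((n : ℤ) - p * q) :=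
    balanced_sum q n _ hmlo hmhi
      (by exact_mod_cast congrArg (fun x : ℕ => (x : ℤ)) hsum)
  -- sum of s is zero
  have hsum_s : ∑ i, s i = 0 := by
    have h1 : ∑ i, ((m i : ℤ) + s i) = (n : ℤ) := by
      rw [← Finset.sum_congr rfl (fun i _ => ha i)]
      exact_mod_cast congrArg (fun x : ℕ => (x : ℤ)) hsumA
    have h2 : ∑ i, (m i : ℤ) = (n : ℤ) := by
      exact_mod_cast congrArg (fun x : ℕ => (x : ℤ)) hsum
    rw [Finset.sum_add_distrib, h2] at h1
    linarith
  -- pointwise inequality summed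
  have hpts : (0 : ℤ) ≤ ∑ i, (((m i : ℤ) + s i) * (((m i : ℤ) + s i) - 1)
      - (m i : ℤ) * ((m i : ℤ) - 1) - |s i| * (|s i| - 1)) := by
    have h1 : ∑ i, 2 * q * s i ≤ ∑ i, (((m i : ℤ) + s i) * (((m i : ℤ) + s i) - 1)
        - (m i : ℤ) * ((m i : ℤ) - 1) - |s i| * (|s i| - 1)) :=
      Finset.sum_le_sum (fun i _ => pt_key q (m i) (s i) (hmlo i) (hmhi i))
    have h2 : ∑ i, 2 * q * s i = 0 := by rw [← Finset.mul_sum, hsum_s, mul_zero]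
    linarith
  -- expand the sum of differences
  have hsplit : ∑ i, (((m i : ℤ) + s i) * (((m i : ℤ) + s i) - 1)
      - (m i : ℤ) * ((m i : ℤ) - 1) - |s i| * (|s i| - 1))
      = ∑ i, ((m i : ℤ) + s i) * (((m i : ℤ) + s i) - 1)
        - ∑ i, (m i : ℤ) * ((m i : ℤ) - 1) - ∑ i, |s i| * (|s i| - 1) := by
    rw [← Finset.sum_sub_distrib, ← Finset.sum_sub_distrib]
  -- choose identity summed
  have hch : ∑ i, |s i| * (|s i| - 1) = 2 * ∑ i, ((s i).natAbs.choose 2 : ℤ) := by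
    rw [Finset.mul_sum]
    exact Finset.sum_congr rfl (fun i _ => (two_mul_choose_two_int (s i)).symm)
  -- rewrite the coloring class sums using ha
  have hAclass : ∑ r, ((univ.filter fun w => (c : Fin n → Fin p) w = r).card : ℤ)
      * (((univ.filter fun w => (c : Fin n → Fin p) w = r).card : ℤ) - 1)
      = ∑ i, ((m i : ℤ) + s i) * (((m i : ℤ) + s i) - 1) :=
    Finset.sum_congr rfl (fun i _ => by rw [ha i])
  rw [hAclass] at hKf
  rw [hTc] at hTur
  rw [hsplit, hch] at hpts
  rw [hTurEq]
  linarith
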